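/- The function φ^(e) equals the Dirichlet convolution v * τ(1,3,·), where τ(1,3,n)=∑_{ab^3=n}1 and v is the multiplicative function with v(p^a)=0 for 1≤a≤4 and v(p^a)=φ(a)-φ(a-1)-φ(a-3)+φ(a-4) for a≥5. -/

import Mathlib

open ArithmeticFunction

open scoped Classical in
/-- `τ(1,3;n)`: the number of pairs `(a,b)` with `a * b³ = n`,
i.e. the number of `b` with `b³ ∣ n`. -/
noncomputable def tau13 : ArithmeticFunction ℤ :=
  ⟨fun n => (((n.divisors).filter fun b => b ^ 3 ∣ n).card : ℤ), by simp⟩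

/-- `φ^(e)`, the multiplicative function with `φ^(e)(p^a) = φ(a)`, as an
integer-valued arithmetic function. -/
def phieA : ArithmeticFunction ℤ :=
  ⟨fun n => if n = 0 then 0 else (n.factorization.prod fun _ a => Nat.totient a : ℕ), by simp⟩

lemma phieA_apply (n : ℕ) :
    phieA n = if n = 0 then 0 else ((n.factorization.prod fun _ a => Nat.totient a : ℕ) : ℤ) := rfl

lemma tau13_apply (n : ℕ) :
    tau13 n = (((n.divisors).filter fun b => b ^ 3 ∣ n).card : ℤ) := rfl

lemma phieA_mult : phieA.IsMultiplicative := by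
  constructor
  · simp [phieA_apply]
  · intro m n hmn
    rcases eq_or_ne m 0 with rfl | hm
    · simp [phieA_apply]
    rcases eq_or_ne n 0 with rfl | hn
    · simp [phieA_apply]
    simp only [phieA_apply, if_neg hm, if_neg hn, if_neg (Nat.mul_ne_zero hm hn)]
    rw [Nat.factorization_mul hm hn, Finsupp.prod_add_index_of_disjoint, Nat.cast_mul]
    simpa [Nat.support_factorization] using hmn.disjoint_primeFactors

lemma phieA_pp {p : ℕ} (hp : p.Prime) {a : ℕ} (ha : a ≠ 0) :
    phieA (p ^ a) = (Nat.totient a : ℤ) := by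
  rw [phieA_apply, if_neg (pow_ne_zero _ hp.ne_zero), hp.factorization_pow]
  rw [Finsupp.prod, Finsupp.support_single_ne_zero _ ha]
  simp


open scoped Classical in
noncomputable def cubeInd : ArithmeticFunction ℤ :=
  ⟨fun n => if 0 < n ∧ ∃ r, r ^ 3 = n then 1 else 0, by simp⟩

open scoped Classical in
lemma cubeInd_apply (n : ℕ) :
    cubeInd n = if 0 < n ∧ ∃ r, r ^ 3 = n then 1 else 0 := rfl

lemma cubeInd_mult : cubeInd.IsMultiplicative := by
  constructor
  · rw [cubeInd_apply, if_pos ⟨one_pos, 1, one_pow 3⟩]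
  · intro m n hmn
    rcases eq_or_ne m 0 with rfl | hm
    · simp [cubeInd_apply]
    rcases eq_or_ne n 0 with rfl | hn
    · simp [cubeInd_apply]
    rw [cubeInd_apply, cubeInd_apply, cubeInd_apply]
    have key : (∃ r, r ^ 3 = m * n) ↔ (∃ r, r ^ 3 = m) ∧ ∃ r, r ^ 3 = n := by
      constructor
      · rintro ⟨r, hr⟩
        constructor
        · obtain ⟨d, hd⟩ := exists_eq_pow_of_mul_eq_pow
            (Nat.isUnit_iff.2 hmn) hr.symm
          exact ⟨d, hd.symm⟩
        · obtain ⟨d, hd⟩ := exists_eq_pow_of_mul_eq_pow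
            (Nat.isUnit_iff.2 hmn.symm) (by rw [mul_comm]; exact hr.symm)
          exact ⟨d, hd.symm⟩
      · rintro ⟨⟨r, rfl⟩, ⟨s, rfl⟩⟩
        exact ⟨r * s, by ring⟩
    have hsplit : (0 < m * n ∧ ∃ r, r ^ 3 = m * n)
        ↔ ((0 < m ∧ ∃ r, r ^ 3 = m) ∧ (0 < n ∧ ∃ r, r ^ 3 = n)) := by
      constructor
      · rintro ⟨hpos, hc⟩
        obtain ⟨c1, c2⟩ := key.1 hc
        exact ⟨⟨Nat.pos_of_ne_zero hm, c1⟩, ⟨Nat.pos_of_ne_zero hn, c2⟩⟩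
      · rintro ⟨⟨h1, h2⟩, h3, h4⟩
        exact ⟨Nat.mul_pos h1 h3, key.2 ⟨h2, h4⟩⟩
    have hm' := Nat.pos_of_ne_zero hm
    have hn' := Nat.pos_of_ne_zero hn
    by_cases hA : ∃ r, r ^ 3 = m <;> by_cases hB : ∃ r, r ^ 3 = n
    · rw [if_pos ⟨Nat.mul_pos hm' hn', key.2 ⟨hA, hB⟩⟩, if_pos ⟨hm', hA⟩, if_pos ⟨hn', hB⟩,
        mul_one]
    · rw [if_neg (fun h => hB (key.1 h.2).2), if_neg (fun (h : 0 < n ∧ ∃ r, r ^ 3 = n) => hB h.2),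
        mul_zero]
    · rw [if_neg (fun h => hA (key.1 h.2).1), if_neg (fun (h : 0 < m ∧ ∃ r, r ^ 3 = m) => hA h.2),
        zero_mul]
    · rw [if_neg (fun h => hA (key.1 h.2).1), if_neg (fun (h : 0 < m ∧ ∃ r, r ^ 3 = m) => hA h.2),
        zero_mul]

open scoped Classical in
lemma tau13_eq_sum (n : ℕ) : tau13 n = ∑ i ∈ n.divisors, cubeInd i := by
  rcases eq_or_ne n 0 with rfl | hn
  · simp [tau13_apply]
  have h1 : ∑ i ∈ n.divisors, cubeInd i
      = (((n.divisors).filter fun i => 0 < i ∧ ∃ r, r ^ 3 = i).card : ℤ) := by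
    rw [Finset.card_filter]
    push_cast
    exact Finset.sum_congr rfl fun i _ => (cubeInd_apply i).trans (by split_ifs <;> rfl)
  rw [tau13_apply, h1]
  congr 1
  apply Finset.card_bij (fun b _ => b ^ 3)
  · intro b hb
    simp only [Finset.mem_filter, Nat.mem_divisors] at hb ⊢
    exact ⟨⟨hb.2, hn⟩, Nat.pos_of_ne_zero (by
      rintro h
      rw [pow_eq_zero_iff (by norm_num)] at h
      subst h
      simpa [hn] using hb.1), ⟨b, rfl⟩⟩
  · intro b₁ h₁ b₂ h₂ h
    exact Nat.pow_left_injective (by norm_num) h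
  · intro d hd
    simp only [Finset.mem_filter, Nat.mem_divisors] at hd
    obtain ⟨⟨hdvd, -⟩, -, r, rfl⟩ := hd
    refine ⟨r, ?_, rfl⟩
    simp only [Finset.mem_filter, Nat.mem_divisors]
    exact ⟨⟨(dvd_pow_self r (by norm_num)).trans hdvd, hn⟩, hdvd⟩

lemma tau13_eq_mul : tau13 = cubeInd * (zeta : ArithmeticFunction ℤ) := by
  ext n
  rw [coe_mul_zeta_apply, tau13_eq_sum]

lemma tau13_mult : tau13.IsMultiplicative := by
  rw [tau13_eq_mul]
  exact cubeInd_mult.mul isMultiplicative_zeta.natCast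

lemma tau13_pp {p : ℕ} (hp : p.Prime) (a : ℕ) :
    tau13 (p ^ a) = ((a / 3 + 1 : ℕ) : ℤ) := by
  rw [tau13_apply, Nat.divisors_prime_pow hp]
  congr 2
  rw [Finset.filter_map, Finset.card_map]
  have hiff : ∀ j : ℕ, ((p ^ j) ^ 3 ∣ p ^ a) ↔ j ≤ a / 3 := by
    intro j
    rw [← pow_mul, Nat.pow_dvd_pow_iff_le_right hp.one_lt,
      Nat.le_div_iff_mul_le (by norm_num), mul_comm]
  have h2 : Finset.filter
        ((fun b => b ^ 3 ∣ p ^ a) ∘ (⟨(p ^ ·), Nat.pow_right_injective hp.two_le⟩ : ℕ ↪ ℕ))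
        (Finset.range (a + 1)) = Finset.range (a / 3 + 1) := by
    ext j
    simp only [Finset.mem_filter, Finset.mem_range, Function.comp_apply,
      Function.Embedding.coeFn_mk, hiff, Nat.lt_succ_iff]
    exact ⟨fun h => h.2, fun h => ⟨le_trans h (Nat.div_le_self a 3), h⟩⟩
  rw [h2, Finset.card_range]

lemma mul_pp (f g : ArithmeticFunction ℤ) {p : ℕ} (hp : p.Prime) (a : ℕ) :
    (f * g) (p ^ a) = ∑ j ∈ Finset.range (a + 1), f (p ^ j) * g (p ^ (a - j)) := by
  rw [mul_apply, Nat.sum_divisorsAntidiagonal (f := fun x y => f x * g y),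
    Nat.divisors_prime_pow hp, Finset.sum_map]
  refine Finset.sum_congr rfl fun j hj => ?_
  simp only [Function.Embedding.coeFn_mk]
  congr 2
  rw [Nat.pow_div (Nat.lt_succ_iff.1 (Finset.mem_range.1 hj)) hp.pos]


lemma gsum_eq (g : ℕ → ℤ) (h0 : g 0 = 1) (h14 : ∀ j, 1 ≤ j → j ≤ 4 → g j = 0)
    (h5 : ∀ j, 5 ≤ j → g j = (Nat.totient j : ℤ) - Nat.totient (j - 1)
      - Nat.totient (j - 3) + Nat.totient (j - 4)) :
    ∀ k, 4 ≤ k → ∑ j ∈ Finset.range (k + 1), g j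
      = (Nat.totient k : ℤ) - Nat.totient (k - 3) := by
  intro k hk
  induction k, hk using Nat.le_induction with
  | base =>
    simp only [Finset.sum_range_succ, Finset.sum_range_one]
    rw [h0, h14 1 le_rfl (by norm_num), h14 2 (by norm_num) (by norm_num),
      h14 3 (by norm_num) (by norm_num), h14 4 (by norm_num) le_rfl]
    norm_num [show Nat.totient 4 = 2 from by decide, Nat.totient_one]
  | succ k hk ih =>
    rw [Finset.sum_range_succ, ih, h5 (k + 1) (by omega)]
    have e1 : k + 1 - 1 = k := by omega
    have e2 : k + 1 - 3 = k - 2 := by omega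
    have e3 : k + 1 - 4 = k - 3 := by omega
    rw [e1, e2, e3]
    ring

lemma key_sum (g : ℕ → ℤ) (h0 : g 0 = 1) (h14 : ∀ j, 1 ≤ j → j ≤ 4 → g j = 0)
    (h5 : ∀ j, 5 ≤ j → g j = (Nat.totient j : ℤ) - Nat.totient (j - 1)
      - Nat.totient (j - 3) + Nat.totient (j - 4)) :
    ∀ a, 1 ≤ a → ∑ j ∈ Finset.range (a + 1), g j * (((a - j) / 3 + 1 : ℕ) : ℤ)
      = (Nat.totient a : ℤ) := by
  intro a
  induction a using Nat.strong_induction_on with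
  | _ a ih =>
  intro ha
  match a, ha with
  | 1, _ =>
    simp only [Finset.sum_range_succ, Finset.sum_range_one]
    rw [h0, h14 1 le_rfl (by norm_num)]
    norm_num [Nat.totient_one]
  | 2, _ =>
    simp only [Finset.sum_range_succ, Finset.sum_range_one]
    rw [h0, h14 1 le_rfl (by norm_num), h14 2 (by norm_num) (by norm_num)]
    norm_num [show Nat.totient 2 = 1 from by decide]
  | 3, _ =>
    simp only [Finset.sum_range_succ, Finset.sum_range_one]
    rw [h0, h14 1 le_rfl (by norm_num), h14 2 (by norm_num) (by norm_num),
      h14 3 (by norm_num) (by norm_num)]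
    norm_num [show Nat.totient 3 = 2 from by decide]
  | (b + 4), _ =>
    have hb1 : 1 ≤ b + 1 := by omega
    have ihb := ih (b + 1) (by omega) hb1
    -- peel the last three terms of the sum over range (b + 5)
    have hpeel : ∑ j ∈ Finset.range (b + 4 + 1), g j * (((b + 4 - j) / 3 + 1 : ℕ) : ℤ)
        = (∑ j ∈ Finset.range (b + 2), g j * (((b + 4 - j) / 3 + 1 : ℕ) : ℤ))
          + g (b + 2) * (((b + 4 - (b + 2)) / 3 + 1 : ℕ) : ℤ)
          + g (b + 3) * (((b + 4 - (b + 3)) / 3 + 1 : ℕ) : ℤ)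
          + g (b + 4) * (((b + 4 - (b + 4)) / 3 + 1 : ℕ) : ℤ) := by
      rw [Finset.sum_range_succ, Finset.sum_range_succ, Finset.sum_range_succ]
    have hmain : ∑ j ∈ Finset.range (b + 2), g j * (((b + 4 - j) / 3 + 1 : ℕ) : ℤ)
        = (∑ j ∈ Finset.range (b + 2), g j * (((b + 1 - j) / 3 + 1 : ℕ) : ℤ))
          + ∑ j ∈ Finset.range (b + 2), g j := by
      rw [← Finset.sum_add_distrib]
      refine Finset.sum_congr rfl fun j hj => ?_
      have hj' : j ≤ b + 1 := by
        have := Finset.mem_range.1 hj; omega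
      have e : b + 4 - j = (b + 1 - j) + 3 := by omega
      rw [e, Nat.add_div_right _ (by norm_num)]
      push_cast
      ring
    have hsmall : ((b + 4 - (b + 2)) / 3 + 1 : ℕ) = 1 := by omega
    have hsmall2 : ((b + 4 - (b + 3)) / 3 + 1 : ℕ) = 1 := by omega
    have hsmall3 : ((b + 4 - (b + 4)) / 3 + 1 : ℕ) = 1 := by omega
    have hg : ∑ j ∈ Finset.range (b + 4 + 1), g j
        = (∑ j ∈ Finset.range (b + 2), g j) + g (b + 2) + g (b + 3) + g (b + 4) := by
      simp only [Finset.sum_range_succ]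
    have hGsum := gsum_eq g h0 h14 h5 (b + 4) (by omega)
    have e4 : b + 4 - 3 = b + 1 := by omega
    rw [e4] at hGsum
    have ihb' : ∑ j ∈ Finset.range (b + 2), g j * (((b + 1 - j) / 3 + 1 : ℕ) : ℤ)
        = (Nat.totient (b + 1) : ℤ) := ihb
    rw [hpeel, hmain, ihb', hsmall, hsmall2, hsmall3]
    push_cast
    linarith [hGsum, hg]
theorem phie_eq_v_mul_tau13 (v : ArithmeticFunction ℤ) (hv : v.IsMultiplicative)
    (hv1 : ∀ p : ℕ, p.Prime → ∀ a : ℕ, 1 ≤ a → a ≤ 4 → v (p ^ a) = 0)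
    (hv2 : ∀ p : ℕ, p.Prime → ∀ a : ℕ, 5 ≤ a → v (p ^ a) =
      (Nat.totient a : ℤ) - Nat.totient (a - 1) - Nat.totient (a - 3) + Nat.totient (a - 4)) :
    phieA = v * tau13 := by
  rw [IsMultiplicative.eq_iff_eq_on_prime_powers phieA phieA_mult (v * tau13) (hv.mul tau13_mult)]
  intro p i hp
  rw [mul_pp v tau13 hp i]
  rcases Nat.eq_zero_or_pos i with rfl | hi
  · have h1 : tau13 1 = 1 := by simpa using tau13_pp hp 0
    simp [phieA_mult.1, hv.1, h1]
  · rw [phieA_pp hp hi.ne']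
    rw [Finset.sum_congr rfl (fun j _ => by rw [tau13_pp hp] :
      ∀ j ∈ Finset.range (i + 1), v (p ^ j) * tau13 (p ^ (i - j))
        = v (p ^ j) * (((i - j) / 3 + 1 : ℕ) : ℤ))]
    exact (key_sum (fun j => v (p ^ j)) (by simpa using hv.1)
      (fun j hj1 hj4 => hv1 p hp j hj1 hj4) (fun j hj5 => hv2 p hp j hj5) i hi).symm
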